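/- Let N be a nontrivial proper normal subgroup of a finite group G. Then (G,N) is a Camina pair if and only if for every x ∈ G∖N, the order of the centralizer C_G(x) equals the order of the centralizer C_{G/N}(xN) of the image of x in G/N. -/

import Mathlib

open MulAction Subgroup

private lemma camina_orbstab {H : Type*} [Group H] [Fintype H] (g : H) :
    Nat.card (orbit (ConjAct H) g) * Nat.card (centralizer {g}) = Nat.card H := by
  classical
  have hc : Nat.card (centralizer {g}) = Nat.card (stabilizer (ConjAct H) g) := by
    refine Nat.card_congr (Equiv.subtypeEquiv ConjAct.toConjAct.toEquiv fun y => ?_)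
    rw [Subgroup.centralizer_eq_comap_stabilizer]
    rfl
  rw [hc]
  simp only [Nat.card_eq_fintype_card]
  rw [MulAction.card_orbit_mul_card_stabilizer_eq_card_group]
  exact Fintype.card_congr ConjAct.toConjAct.toEquiv.symm

private lemma camina_key {G : Type*} [Group G] [Fintype G] (N : Subgroup G) [N.Normal]
    {x : G} (hx : x ∉ N) :
    (∀ n ∈ N, IsConj x (x * n)) ↔
      Nat.card ↥(Subgroup.centralizer {x}) =
        Nat.card ↥(Subgroup.centralizer {((x : G) : G ⧸ N)}) := by
  classical
  have : Fintype (G ⧸ N) := Fintype.ofFinite _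
  set S : Set G := orbit (ConjAct G) x with hS
  set T : Set (G ⧸ N) := orbit (ConjAct (G ⧸ N)) ((x : G ⧸ N)) with hT
  set P : Set G := QuotientGroup.mk ⁻¹' T with hP
  have hSP : S ⊆ P := by
    intro y hy
    rw [hS, ConjAct.mem_orbit_conjAct] at hy
    have : IsConj (y : G ⧸ N) ((x : G) : G ⧸ N) :=
      (QuotientGroup.mk' N).map_isConj hy
    rwa [hP, Set.mem_preimage, ConjAct.mem_orbit_conjAct]
  -- step 1 : Camina at x ↔ S = P
  have step1 : (∀ n ∈ N, IsConj x (x * n)) ↔ S = P := by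
    constructor
    · intro h
      refine Set.Subset.antisymm hSP fun y hy => ?_
      rw [hP, Set.mem_preimage, ConjAct.mem_orbit_conjAct, isConj_iff] at hy
      obtain ⟨c, hc⟩ := hy
      obtain ⟨g, rfl⟩ := QuotientGroup.mk_surjective c
      have hc' : ((g * y * g⁻¹ : G) : G ⧸ N) = ((x : G) : G ⧸ N) := by
        simpa using hc
      rw [QuotientGroup.eq_iff_div_mem] at hc'
      set n : G := x⁻¹ * (g * y * g⁻¹) with hn
      have hnN : n ∈ N := by
        rw [div_eq_mul_inv] at hc'
        have := (‹N.Normal›).conj_mem _ hc' x⁻¹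
        have e : x⁻¹ * (g * y * g⁻¹ * x⁻¹) * x⁻¹⁻¹ = n := by rw [hn]; group
        rwa [e] at this
      have hgy : g * y * g⁻¹ = x * n := by rw [hn]; group
      have h1 : IsConj x (g * y * g⁻¹) := hgy ▸ h n hnN
      have h2 : IsConj (g * y * g⁻¹) y := isConj_iff.mpr ⟨g⁻¹, by group⟩
      rw [hS, ConjAct.mem_orbit_conjAct]
      exact (h1.trans h2).symm
    · intro h n hn
      have hxn : x * n ∈ P := by
        rw [hP, Set.mem_preimage]
        have : ((x * n : G) : G ⧸ N) = ((x : G) : G ⧸ N) := by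
          rw [QuotientGroup.mk_mul, (QuotientGroup.eq_one_iff n).mpr hn, mul_one]
        rw [this]
        exact mem_orbit_self _
      rw [← h, hS, ConjAct.mem_orbit_conjAct] at hxn
      exact hxn.symm
  -- step 2 : S = P ↔ Nat.card S = Nat.card P
  have step2 : S = P ↔ Nat.card S = Nat.card P := by
    constructor
    · intro h; rw [h]
    · intro h
      have hfin : P.Finite := Set.toFinite _
      apply Set.eq_of_subset_of_ncard_le hSP _ hfin
      rw [← Nat.card_coe_set_eq, ← Nat.card_coe_set_eq, h]
  -- step 3 : counting
  have h1 : Nat.card S * Nat.card (centralizer {x}) = Nat.card G := camina_orbstab x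
  have h2 : Nat.card T * Nat.card (centralizer {((x : G) : G ⧸ N)}) = Nat.card (G ⧸ N) :=
    camina_orbstab _
  have h3 : Nat.card P = Nat.card N * Nat.card T := by
    rw [hP, Nat.card_congr (QuotientGroup.preimageMkEquivSubgroupProdSet N T), Nat.card_prod]
  have h4 : Nat.card G = Nat.card (G ⧸ N) * Nat.card N :=
    Subgroup.card_eq_card_quotient_mul_card_subgroup N
  have key : Nat.card S * Nat.card (centralizer {x})
      = Nat.card P * Nat.card (centralizer {((x : G) : G ⧸ N)}) := by
    calc Nat.card S * Nat.card (centralizer {x}) = Nat.card G := h1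
      _ = Nat.card (G ⧸ N) * Nat.card N := h4
      _ = Nat.card N * (Nat.card T * Nat.card (centralizer {((x : G) : G ⧸ N)})) := by
          rw [h2]; ring
      _ = Nat.card P * Nat.card (centralizer {((x : G) : G ⧸ N)}) := by rw [h3]; ring
  have hne : Nonempty S := ⟨⟨x, MulAction.mem_orbit_self x⟩⟩
  have hSpos : 0 < Nat.card S := Nat.card_pos
  have hCpos : 0 < Nat.card (centralizer {x}) := Nat.card_pos
  rw [step1, step2]
  constructor
  · intro h
    rw [h] at key
    exact Nat.eq_of_mul_eq_mul_left (h ▸ hSpos) key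
  · intro h
    rw [← h] at key
    exact Nat.eq_of_mul_eq_mul_right hCpos key

/-- `(G, N)` is a Camina pair: `N` is a nontrivial proper (normal) subgroup of `G` and
every `x ∈ G \ N` is conjugate to every element of the coset `xN`. -/
def IsCaminaPair {G : Type*} [Group G] (N : Subgroup G) : Prop :=
  N ≠ ⊥ ∧ N ≠ ⊤ ∧ ∀ x ∉ N, ∀ n ∈ N, IsConj x (x * n)

theorem camina_iff_centralizer_card {G : Type*} [Group G] [Fintype G]
    (N : Subgroup G) [N.Normal] (hbot : N ≠ ⊥) (htop : N ≠ ⊤) :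
    IsCaminaPair N ↔
      ∀ x ∉ N, Nat.card ↥(Subgroup.centralizer {x}) =
        Nat.card ↥(Subgroup.centralizer {((x : G) : G ⧸ N)}) := by
  constructor
  · rintro ⟨-, -, hc⟩ x hx
    exact (camina_key N hx).mp (hc x hx)
  · intro h
    exact ⟨hbot, htop, fun x hx => (camina_key N hx).mpr (h x hx)⟩
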